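/- arXiv:1606.06794 — 3 statements merged into one kernel-verified Lean document; each statement's English description precedes it below -/
import Mathlib

section
/- The function f(l) = log U(l), where U(l) = 1 - c(1/(1+e^{-a(l-b)}) - d) is the sigmoidal utility with a,b > 0, c = (1+e^{ab})/e^{ab}, d = 1/(1+e^{ab}), is concave on [0,∞). -/
open Real Set

private lemma g_deriv : deriv (fun x => Real.log (1 + Real.exp x)) =
    fun x => Real.exp x / (1 + Real.exp x) := by
  funext x
  have h : (0:ℝ) < 1 + Real.exp x := by positivity
  exact (((Real.hasDerivAt_exp x).const_add 1).log h.ne').deriv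

private lemma g_convex : ConvexOn ℝ univ (fun x => Real.log (1 + Real.exp x)) := by
  have hd1 : Differentiable ℝ (fun x => Real.log (1 + Real.exp x)) := by
    intro x
    have h : (0:ℝ) < 1 + Real.exp x := by positivity
    exact (((Real.hasDerivAt_exp x).const_add 1).log h.ne').differentiableAt
  have hderiv2 : ∀ x, HasDerivAt (deriv (fun x => Real.log (1 + Real.exp x)))
      (Real.exp x / (1 + Real.exp x)^2) x := by
    intro x
    rw [g_deriv]
    have h : (0:ℝ) < 1 + Real.exp x := by positivity
    have : HasDerivAt (fun y => Real.exp y / (1 + Real.exp y)) _ x := (Real.hasDerivAt_exp x).div ((Real.hasDerivAt_exp x).const_add 1) h.ne'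
    convert this using 1
    ring
  refine convexOn_univ_of_deriv2_nonneg hd1 (fun x => (hderiv2 x).differentiableAt) ?_
  intro x
  have h : (0:ℝ) < 1 + Real.exp x := by positivity
  simp only [Function.iterate_succ, Function.iterate_zero, Function.comp_apply, id_eq]
  rw [(hderiv2 x).deriv]
  positivity

theorem stmt_6 (a b : ℝ) (ha : 0 < a) (hb : 0 < b)
    (c d : ℝ) (hc : c = (1 + Real.exp (a*b)) / Real.exp (a*b))
    (hd : d = 1 / (1 + Real.exp (a*b)))
    (U : ℝ → ℝ) (hU : ∀ l, U l = 1 - c * (1 / (1 + Real.exp (-a*(l-b))) - d)) :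
    ConcaveOn ℝ (Set.Ici 0) (fun l => Real.log (U l)) := by
  have key : ∀ l, Real.log (U l) =
      Real.log (1 + Real.exp (-(a*b))) - Real.log (1 + Real.exp (a*(l-b))) := by
    intro l
    have hUl : U l = (1 + Real.exp (-(a*b))) / (1 + Real.exp (a*(l-b))) := by
      rw [hU, hc, hd]
      have h1 : Real.exp (-a*(l-b)) = (Real.exp (a*(l-b)))⁻¹ := by
        rw [← Real.exp_neg]; ring_nf
      have h2 : Real.exp (-(a*b)) = (Real.exp (a*b))⁻¹ := Real.exp_neg _
      have hE : (0:ℝ) < Real.exp (a*b) := Real.exp_pos _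
      have hT : (0:ℝ) < Real.exp (a*(l-b)) := Real.exp_pos _
      rw [h1, h2]
      have h3 : (0:ℝ) < 1 + Real.exp (a*b) := by positivity
      have h4 : (0:ℝ) < 1 + Real.exp (a*(l-b)) := by positivity
      field_simp
      ring
    rw [hUl, Real.log_div (by positivity) (by positivity)]
  have hfun : (fun l => Real.log (U l)) =
      fun l => Real.log (1 + Real.exp (-(a*b))) +
        -(Real.log (1 + Real.exp (a*(l-b)))) := by
    funext l; rw [key l]; ring
  rw [hfun]
  refine (concaveOn_const _ (convex_Ici 0)).add ?_
  have hcomp : ConvexOn ℝ (Set.Ici 0) (fun l : ℝ => Real.log (1 + Real.exp (a*(l-b)))) := by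
    refine ⟨convex_Ici 0, ?_⟩
    intro x _ y _ μ ν hμ hν hμν
    have := g_convex.2 (mem_univ (a*(x-b))) (mem_univ (a*(y-b))) hμ hν hμν
    simp only [smul_eq_mul] at this ⊢
    have harg : a*((μ*x + ν*y) - b) = μ*(a*(x-b)) + ν*(a*(y-b)) := by
      linear_combination (a*b) * hμν
    rw [harg]
    exact this
  exact hcomp.neg
end

section
/- The second derivative of f(l) = log U(l), with U the sigmoidal utility with parameters a,b > 0, equals -a² θ(l)/(1+θ(l))² where θ(l) = e^{-a(l-b)}; in particular it is strictly negative for all l. -/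
theorem stmt_7 (a b : ℝ) (ha : 0 < a) (hb : 0 < b)
    (c d : ℝ) (hc : c = (1 + Real.exp (a*b)) / Real.exp (a*b))
    (hd : d = 1 / (1 + Real.exp (a*b)))
    (U θ : ℝ → ℝ) (hU : ∀ l, U l = 1 - c * (1 / (1 + Real.exp (-a*(l-b))) - d))
    (hθ : ∀ l, θ l = Real.exp (-a*(l-b))) :
    ∀ l : ℝ, deriv (deriv (fun x => Real.log (U x))) l = -a^2 * θ l / (1 + θ l)^2 ∧
      deriv (deriv (fun x => Real.log (U x))) l < 0 := by
  have hEpos : ∀ x : ℝ, (0:ℝ) < Real.exp (-a*(x-b)) := fun x => Real.exp_pos _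
  have hden : ∀ x : ℝ, (0:ℝ) < 1 + Real.exp (-a*(x-b)) := fun x => by positivity
  set K : ℝ := Real.log (1 + Real.exp (-(a*b))) with hK
  -- rewrite log ∘ U
  have hfun : (fun x => Real.log (U x)) =
      fun x => K + (-a*(x-b)) - Real.log (1 + Real.exp (-a*(x-b))) := by
    funext x
    have hE : (0:ℝ) < Real.exp (a*b) := Real.exp_pos _
    have hE1 : (0:ℝ) < 1 + Real.exp (a*b) := by positivity
    have hU' : U x = (1 + Real.exp (-(a*b))) * (Real.exp (-a*(x-b)) / (1 + Real.exp (-a*(x-b)))) := by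
      rw [hU, hc, hd, Real.exp_neg]
      field_simp
      ring
    rw [hU', Real.log_mul (by positivity) (by positivity),
      Real.log_div (by positivity) (by positivity), Real.log_exp]
    ring
  rw [hfun]
  -- first derivative
  have hd1 : ∀ x : ℝ, HasDerivAt (fun y => K + (-a*(y-b)) - Real.log (1 + Real.exp (-a*(y-b))))
      (-a + a * Real.exp (-a*(x-b)) / (1 + Real.exp (-a*(x-b)))) x := by
    intro x
    have hlin : HasDerivAt (fun y : ℝ => -a*(y-b)) (-a) x := by
      simpa using ((hasDerivAt_id x).sub_const b).const_mul (-a)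
    have hT : HasDerivAt (fun y => Real.exp (-a*(y-b))) (-a * Real.exp (-a*(x-b))) x := by
      simpa [mul_comm] using hlin.exp
    have hlog : HasDerivAt (fun y => Real.log (1 + Real.exp (-a*(y-b))))
        ((-a * Real.exp (-a*(x-b))) / (1 + Real.exp (-a*(x-b)))) x := by
      simpa using ((hasDerivAt_const x (1:ℝ)).add hT).log (ne_of_gt (hden x))
    have := ((hasDerivAt_const x K).add hlin).sub hlog
    refine this.congr_deriv ?_
    have h := (hden x).ne'
    field_simp
    ring
  have hderiv1 : deriv (fun y => K + (-a*(y-b)) - Real.log (1 + Real.exp (-a*(y-b))))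
      = fun x => -a + a * Real.exp (-a*(x-b)) / (1 + Real.exp (-a*(x-b))) := by
    funext x; exact (hd1 x).deriv
  rw [hderiv1]
  intro l
  -- second derivative
  have hlin : HasDerivAt (fun y : ℝ => -a*(y-b)) (-a) l := by
    simpa using ((hasDerivAt_id l).sub_const b).const_mul (-a)
  have hT : HasDerivAt (fun y => Real.exp (-a*(y-b))) (-a * Real.exp (-a*(l-b))) l := by
    simpa [mul_comm] using hlin.exp
  set T : ℝ := Real.exp (-a*(l-b)) with hTdef
  have hnum : HasDerivAt (fun y => a * Real.exp (-a*(y-b))) (a * (-a * T)) l := hT.const_mul a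
  have hdenom : HasDerivAt (fun y => 1 + Real.exp (-a*(y-b))) (-a * T) l := by
    exact ((hasDerivAt_const l (1:ℝ)).add hT).congr_deriv (zero_add _)
  have hdiv : HasDerivAt (fun y => a * Real.exp (-a*(y-b)) / (1 + Real.exp (-a*(y-b))))
      ((a * (-a * T) * (1 + T) - a * T * (-a * T)) / (1 + T)^2) l :=
    hnum.div hdenom (ne_of_gt (hden l))
  have h2 : HasDerivAt (fun x => -a + a * Real.exp (-a*(x-b)) / (1 + Real.exp (-a*(x-b))))
      (-a^2 * T / (1 + T)^2) l := by
    have := (hasDerivAt_const l (-a)).add hdiv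
    refine this.congr_deriv ?_
    have h := (hden l).ne'
    field_simp
    ring
  have hθl : θ l = T := hθ l
  constructor
  · rw [h2.deriv, hθl]
  · rw [h2.deriv]
    apply div_neg_of_neg_of_pos
    · have : (0:ℝ) < T := hEpos l
      nlinarith [mul_pos (pow_pos ha 2) this]
    · positivity
end

section
/- Let f(α) = log U(ℓ(α)) where ℓ(α) = α·ℓ₁ + (1-α)·ℓ₂ is an affine function with ℓ₁, ℓ₂ ≥ 0, and U is the sigmoidal utility with parameters a,b > 0. Then f is concave on [0,1]. -/
open Real

lemma log1pexp_convex : ConvexOn ℝ Set.univ (fun x : ℝ => Real.log (1 + Real.exp x)) := by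
  have hpos : ∀ x : ℝ, 0 < 1 + Real.exp x := fun x => by positivity
  have hd1 : ∀ x : ℝ, HasDerivAt (fun x : ℝ => Real.log (1 + Real.exp x))
      (Real.exp x / (1 + Real.exp x)) x := by
    intro x
    have h : HasDerivAt (fun x : ℝ => 1 + Real.exp x) (Real.exp x) x :=
      (Real.hasDerivAt_exp x).const_add 1
    simpa using h.log (hpos x).ne'
  have hderiv1 : deriv (fun x : ℝ => Real.log (1 + Real.exp x)) =
      fun x => Real.exp x / (1 + Real.exp x) := funext fun x => (hd1 x).deriv
  have hd2 : ∀ x : ℝ, HasDerivAt (fun x : ℝ => Real.exp x / (1 + Real.exp x))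
      (Real.exp x / (1 + Real.exp x)^2) x := by
    intro x
    have h1 : HasDerivAt (fun x : ℝ => 1 + Real.exp x) (Real.exp x) x :=
      (Real.hasDerivAt_exp x).const_add 1
    have := (Real.hasDerivAt_exp x).div h1 (hpos x).ne'
    convert this using 1
    iterate 3 rfl
    ring
  apply convexOn_of_deriv2_nonneg convex_univ
  · exact fun x _ => (hd1 x).continuousAt.continuousWithinAt
  · intro x _
    exact ((hd1 x).differentiableAt).differentiableWithinAt
  · intro x _
    rw [hderiv1]
    exact ((hd2 x).differentiableAt).differentiableWithinAt
  · intro x _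
    have h2 : deriv^[2] (fun x : ℝ => Real.log (1 + Real.exp x)) =
        deriv (deriv (fun x : ℝ => Real.log (1 + Real.exp x))) := rfl
    rw [h2, hderiv1, (hd2 x).deriv]
    positivity

theorem stmt_8 (a b l₁ l₂ : ℝ) (ha : 0 < a) (hb : 0 < b) (hl₁ : 0 ≤ l₁) (hl₂ : 0 ≤ l₂)
    (c d : ℝ) (hc : c = (1 + Real.exp (a*b)) / Real.exp (a*b))
    (hd : d = 1 / (1 + Real.exp (a*b)))
    (U : ℝ → ℝ) (hU : ∀ l, U l = 1 - c * (1 / (1 + Real.exp (-a*(l-b))) - d))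
    (f : ℝ → ℝ) (hf : ∀ α, f α = Real.log (U (α * l₁ + (1-α) * l₂))) :
    ConcaveOn ℝ (Set.Icc 0 1) f := by
  -- U l = (1 + exp(-a*b)) / (1 + exp(a*(l-b)))
  have hU' : ∀ l : ℝ, U l = (1 + Real.exp (-(a*b))) / (1 + Real.exp (a*(l-b))) := by
    intro l
    rw [hU, hc, hd]
    have h1 : Real.exp (-a*(l-b)) = (Real.exp (a*(l-b)))⁻¹ := by
      rw [← Real.exp_neg]; ring_nf
    have h2 : Real.exp (-(a*b)) = (Real.exp (a*b))⁻¹ := Real.exp_neg _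
    rw [h1, h2]
    set t := Real.exp (a*(l-b)) with ht
    set E := Real.exp (a*b) with hE
    have htpos : 0 < t := Real.exp_pos _
    have hEpos : 0 < E := Real.exp_pos _
    have h3 : (0:ℝ) < 1 + t := by linarith
    have h4 : (0:ℝ) < 1 + E := by linarith
    have h5 : (0:ℝ) < 1 + t⁻¹ := by positivity
    field_simp
    ring
  -- f α = log(1+exp(-(a*b))) - log(1 + exp(a*(ℓ α - b)))
  have hf' : ∀ α : ℝ, f α = Real.log (1 + Real.exp (-(a*b)))
      - Real.log (1 + Real.exp (a*((α * l₁ + (1-α) * l₂) - b))) := by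
    intro α
    rw [hf, hU']
    apply Real.log_div (by positivity) (by positivity)
  -- convexity of the composite
  have hconv : ConvexOn ℝ Set.univ
      (fun α : ℝ => Real.log (1 + Real.exp (a*((α * l₁ + (1-α) * l₂) - b)))) := by
    constructor
    · exact convex_univ
    · intro x _ y _ p q hp hq hpq
      have key := log1pexp_convex.2 (Set.mem_univ (a*((x * l₁ + (1-x) * l₂) - b)))
        (Set.mem_univ (a*((y * l₁ + (1-y) * l₂) - b))) hp hq hpq
      simp only [smul_eq_mul] at key ⊢
      have harg : a*((p * x + q * y) * l₁ + (1-(p * x + q * y)) * l₂ - b)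
          = p * (a*(x * l₁ + (1-x) * l₂ - b)) + q * (a*(y * l₁ + (1-y) * l₂ - b)) := by
        have hq : q = 1 - p := by linarith
        rw [hq]; ring
      rw [harg]
      exact key
  have hconc : ConcaveOn ℝ Set.univ f := by
    have h1 : ConcaveOn ℝ Set.univ
        (fun α : ℝ => -Real.log (1 + Real.exp (a*((α * l₁ + (1-α) * l₂) - b)))) := hconv.neg
    have h2 := h1.add_const (Real.log (1 + Real.exp (-(a*b))))
    have : f = (fun α : ℝ => -Real.log (1 + Real.exp (a*((α * l₁ + (1-α) * l₂) - b)))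
        + Real.log (1 + Real.exp (-(a*b)))) := by
      funext α; rw [hf' α]; ring
    rw [this]
    exact h2
  exact hconc.subset (Set.subset_univ _) (convex_Icc 0 1)
end
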